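/- Define $G(r) = \frac{1}{\sqrt{2 r\, c_0(2r)}} + \frac{2 e^{\pi\sqrt 3}\, C\big(\frac{\log 3}{2}\big)\, e^{-\pi/\sinh(r)}}{3\sinh^2(r)}$, where $c_0(L) = h(L) + \frac{1}{2}\sin(2h(L))$ with $h(L) = \arccos(\tanh(L/2))$, and $C(r) = \left(\frac{4\pi}{3}\left(1 - \operatorname{sech}^6(r/2)\right)\right)^{-1/2}$. Then $\sqrt{\pi r}\, G(r) = 1 + \frac{2 r^3}{3\pi} + O(r^5)$ as $r \to 0^+$; that is, there exist $\delta > 0$ and $M > 0$ such that for all $0 < r < \delta$, $\left| \sqrt{\pi r}\, G(r) - 1 - \frac{2r^3}{3\pi} \right| \leq M r^5$. -/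

import Mathlib

open Real

/-- Half the angular width of the standard collar of a geodesic of length `L`. -/
noncomputable def hh (L : ℝ) : ℝ := Real.arccos (Real.tanh (L / 2))

/-- `c₀(L) = h(L) + sin(2h(L))/2`. -/
noncomputable def c₀ (L : ℝ) : ℝ := hh L + Real.sin (2 * hh L) / 2

/-- Teo's function `C(r) = ((4π/3)(1 - sech⁶(r/2)))^{-1/2}`. -/
noncomputable def TeoC (r : ℝ) : ℝ :=
  (Real.sqrt (4 * π / 3 * (1 - (1 / Real.cosh (r / 2)) ^ 6)))⁻¹

/-- The collar bound of Part (4) of Proposition 3.3. -/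
noncomputable def G (r : ℝ) : ℝ :=
  1 / Real.sqrt (2 * r * c₀ (2 * r)) +
    2 * Real.exp (π * Real.sqrt 3) * TeoC (Real.log 3 / 2) * Real.exp (-π / Real.sinh r)
      / (3 * Real.sinh r ^ 2)

lemma sinh_le_mul_cosh' {t : ℝ} (ht : 0 ≤ t) : Real.sinh t ≤ t * Real.cosh t := by
  have hd : ∀ x : ℝ, HasDerivAt (fun t : ℝ => t * Real.cosh t - Real.sinh t)
      (x * Real.sinh x) x := by
    intro x
    have h1 := ((hasDerivAt_id x).mul (Real.hasDerivAt_cosh x)).sub (Real.hasDerivAt_sinh x)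
    refine h1.congr_deriv ?_
    simp only [id]; ring
  have hmono : Monotone (fun t : ℝ => t * Real.cosh t - Real.sinh t) := by
    apply monotone_of_deriv_nonneg
    · intro x; exact (hd x).differentiableAt
    · intro x
      rw [(hd x).deriv]
      rcases le_or_gt 0 x with h | h
      · exact mul_nonneg h (Real.sinh_nonneg_iff.2 h)
      · have hsx : Real.sinh x ≤ 0 := by
          rw [← Real.sinh_zero]; exact Real.sinh_le_sinh.2 h.le
        nlinarith
  have := hmono ht
  simpa using this

lemma cosh_le_one_add_sq' {t : ℝ} (ht : 0 ≤ t) (ht1 : t ≤ 1) : Real.cosh t ≤ 1 + t ^ 2 := by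
  have h2 : Real.cosh t = 1 + 2 * Real.sinh (t/2) ^ 2 := by
    have h := Real.cosh_two_mul (t/2)
    have hc := Real.cosh_sq (t/2)
    rw [show 2 * (t/2) = t by ring] at h
    nlinarith
  have hs : Real.sinh (t/2) ≤ (t/2) * Real.cosh (t/2) := sinh_le_mul_cosh' (by linarith)
  have hs0 : 0 ≤ Real.sinh (t/2) := Real.sinh_nonneg_iff.2 (by linarith)
  have hcs := Real.cosh_sq (t/2)
  have hy2 : Real.sinh (t/2) ^ 2 ≤ (t/2) ^ 2 * (Real.sinh (t/2) ^ 2 + 1) := by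
    nlinarith [mul_le_mul hs hs hs0 (by positivity : (0:ℝ) ≤ (t/2) * Real.cosh (t/2))]
  have ht2 : t ^ 2 ≤ 1 := by nlinarith
  have hty : t ^ 2 * Real.sinh (t/2) ^ 2 ≤ Real.sinh (t/2) ^ 2 := by
    nlinarith [mul_le_mul_of_nonneg_right ht2 (sq_nonneg (Real.sinh (t/2)))]
  nlinarith

lemma one_add_sq_half_le_cosh {x : ℝ} (hx : 0 ≤ x) : 1 + x^2/2 ≤ Real.cosh x := by
  have h2 : Real.cosh x = 1 + 2 * Real.sinh (x/2) ^ 2 := by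
    have h := Real.cosh_two_mul (x/2)
    have hc := Real.cosh_sq (x/2)
    rw [show 2 * (x/2) = x by ring] at h
    nlinarith
  have hs : x/2 ≤ Real.sinh (x/2) := Real.self_le_sinh_iff.2 (by linarith)
  nlinarith

lemma tanh_ne_one' (t : ℝ) : Real.tanh t ≠ 1 := by
  have h := Real.cosh_sub_sinh t
  have he := Real.exp_pos (-t)
  have hc := Real.cosh_pos t
  rw [Real.tanh_eq_sinh_div_cosh]
  intro h1
  rw [div_eq_one_iff_eq (ne_of_gt hc)] at h1
  linarith

lemma tanh_ne_neg_one' (t : ℝ) : Real.tanh t ≠ -1 := by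
  have h := Real.cosh_add_sinh t
  have he := Real.exp_pos t
  have hc := Real.cosh_pos t
  rw [Real.tanh_eq_sinh_div_cosh]
  intro h1
  rw [div_eq_iff (ne_of_gt hc)] at h1
  linarith

lemma sqrt_one_sub_tanh_sq (t : ℝ) : Real.sqrt (1 - Real.tanh t ^ 2) = (Real.cosh t)⁻¹ := by
  have hc' : Real.cosh t ≠ 0 := ne_of_gt (Real.cosh_pos t)
  have : 1 - Real.tanh t ^ 2 = ((Real.cosh t)⁻¹) ^ 2 := by
    rw [Real.tanh_eq_sinh_div_cosh]
    field_simp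
    exact Real.cosh_sq_sub_sinh_sq t
  rw [this, Real.sqrt_sq (by positivity)]

noncomputable def phi (t : ℝ) : ℝ :=
  Real.arccos (Real.tanh t) + Real.sinh t / Real.cosh t ^ 2 - π/2 + 2*t^3/3

lemma phi_hasDerivAt (t : ℝ) :
    HasDerivAt phi (2*t^2 - 2*Real.sinh t^2 / Real.cosh t^3) t := by
  have hc := Real.cosh_pos t
  have hc' : Real.cosh t ≠ 0 := ne_of_gt hc
  have hid : Real.cosh t ^ 2 - Real.sinh t ^ 2 = 1 := Real.cosh_sq_sub_sinh_sq t
  have h_tanh : HasDerivAt Real.tanh (1 / Real.cosh t ^ 2) t := by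
    have h := (Real.hasDerivAt_sinh t).div (Real.hasDerivAt_cosh t) hc'
    have heq : (fun x => Real.sinh x / Real.cosh x) = Real.tanh := by
      funext x; rw [Real.tanh_eq_sinh_div_cosh]
    rw [show (Real.sinh / Real.cosh) = Real.tanh from heq] at h
    refine h.congr_deriv ?_
    field_simp
    nlinarith
  have h_sqrt := sqrt_one_sub_tanh_sq t
  have h_ac := (Real.hasDerivAt_arccos (tanh_ne_neg_one' t) (tanh_ne_one' t)).comp t h_tanh
  have h_div : HasDerivAt (fun x => Real.sinh x / Real.cosh x ^ 2)
      ((Real.cosh t * Real.cosh t ^ 2 - Real.sinh t * (2 * Real.cosh t ^ 1 * Real.sinh t))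
        / (Real.cosh t ^ 2) ^ 2) t :=
    (Real.hasDerivAt_sinh t).div ((Real.hasDerivAt_cosh t).pow 2) (by positivity)
  have h_cube : HasDerivAt (fun x : ℝ => 2*x^3/3) (2*t^2) t := by
    have h := (hasDerivAt_pow 3 t).const_mul (2/3 : ℝ)
    have heq : (fun y : ℝ => 2/3 * y^3) = (fun x : ℝ => 2*x^3/3) := by funext x; ring
    rw [heq] at h
    refine h.congr_deriv ?_
    push_cast; ring
  have h_total := ((h_ac.add h_div).sub_const (π/2)).add h_cube
  have heq2 : (fun x => (Real.arccos ∘ Real.tanh) x + Real.sinh x / Real.cosh x ^ 2 - π/2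
      + 2*x^3/3) = phi := by
    funext x; simp [phi, Function.comp]
  rw [show ((fun x => (Real.arccos ∘ Real.tanh + fun x => Real.sinh x / Real.cosh x ^ 2) x - π/2) + fun x : ℝ => 2*x^3/3) = phi from heq2] at h_total
  refine h_total.congr_deriv ?_
  rw [h_sqrt]
  field_simp
  ring_nf

lemma phi_deriv_bound {t : ℝ} (ht : 0 ≤ t) (ht1 : t ≤ 1) :
    |2*t^2 - 2*Real.sinh t^2 / Real.cosh t^3| ≤ 14 * t^4 := by
  set s := Real.sinh t with hs_def
  set c := Real.cosh t with hc_def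
  have hc1 : 1 ≤ c := Real.one_le_cosh t
  have hc0 : (0:ℝ) < c := lt_of_lt_of_le one_pos hc1
  have hts : t ≤ s := Real.self_le_sinh_iff.2 ht
  have hstc : s ≤ t * c := sinh_le_mul_cosh' ht
  have hcb : c ≤ 1 + t^2 := cosh_le_one_add_sq' ht ht1
  have hs0 : 0 ≤ s := le_trans ht hts
  have key : |2*t^2*c^3 - 2*s^2| ≤ 14 * t^4 := by
    rw [abs_le]
    constructor
    · nlinarith [mul_le_mul hstc hstc hs0 (by positivity : (0:ℝ) ≤ t * c),
        mul_nonneg (mul_nonneg (sq_nonneg t) (sq_nonneg c)) (sub_nonneg.2 hc1),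
        pow_pos hc0 3, sq_nonneg t]
    · have hc3 : c^3 ≤ (1 + t^2)^3 := by
        apply pow_le_pow_left₀ (le_of_lt hc0) hcb
      nlinarith [mul_self_le_mul_self ht hts, sq_nonneg t, sq_nonneg (t*t),
        pow_le_one₀ ht ht1 (n:=2), pow_le_one₀ ht ht1 (n:=4)]
  have heq : 2*t^2 - 2*s^2 / c^3 = (2*t^2*c^3 - 2*s^2) / c^3 := by
    field_simp
  rw [heq, abs_div, abs_of_pos (by positivity : (0:ℝ) < c^3)]
  have hdiv : |2*t^2*c^3 - 2*s^2| / c^3 ≤ |2*t^2*c^3 - 2*s^2| :=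
    div_le_self (abs_nonneg _) (one_le_pow₀ hc1)
  linarith

lemma phi_bound {r : ℝ} (hr0 : 0 ≤ r) (hr1 : r ≤ 1) : |phi r| ≤ 14 * r^5 := by
  have hphi0 : phi 0 = 0 := by
    simp [phi, Real.tanh_zero, Real.arccos_zero]
  have hmvt := Convex.norm_image_sub_le_of_norm_hasDerivWithin_le
    (f := phi) (f' := fun t => 2*t^2 - 2*Real.sinh t^2 / Real.cosh t^3)
    (s := Set.Icc 0 r) (C := 14 * r^4)
    (fun x _ => (phi_hasDerivAt x).hasDerivWithinAt)
    (fun x hx => by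
      have h1 : |2*x^2 - 2*Real.sinh x^2 / Real.cosh x^3| ≤ 14 * x^4 :=
        phi_deriv_bound hx.1 (le_trans hx.2 hr1)
      have h2 : x^4 ≤ r^4 := pow_le_pow_left₀ hx.1 hx.2 4
      calc ‖2*x^2 - 2*Real.sinh x^2 / Real.cosh x^3‖
          = |2*x^2 - 2*Real.sinh x^2 / Real.cosh x^3| := rfl
        _ ≤ 14 * x^4 := h1
        _ ≤ 14 * r^4 := by linarith)
    (convex_Icc 0 r) (Set.left_mem_Icc.2 hr0) (Set.right_mem_Icc.2 hr0)
  rw [hphi0, sub_zero] at hmvt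
  have hr : ‖r - 0‖ = r := by rw [sub_zero]; exact abs_of_nonneg hr0
  rw [hr] at hmvt
  calc |phi r| = ‖phi r‖ := rfl
    _ ≤ 14 * r^4 * r := hmvt
    _ = 14 * r^5 := by ring

lemma TeoC_le_two : TeoC (Real.log 3 / 2) ≤ 2 := by
  unfold TeoC
  have hlog : (1:ℝ) ≤ Real.log 3 := by
    rw [Real.le_log_iff_exp_le (by norm_num)]
    have := Real.exp_one_lt_d9
    linarith
  set y := Real.log 3 / 2 / 2 with hy_def
  have hy : (1:ℝ)/4 ≤ y := by rw [hy_def]; linarith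
  have hy0 : (0:ℝ) ≤ y := by linarith
  have hcosh : (33:ℝ)/32 ≤ Real.cosh y := by
    have h1 := one_add_sq_half_le_cosh hy0
    nlinarith
  have hc0 : (0:ℝ) < Real.cosh y := Real.cosh_pos y
  have hsech : (1:ℝ)/Real.cosh y ≤ 32/33 := by
    rw [div_le_div_iff₀ hc0 (by norm_num)]
    linarith
  have hsech0 : (0:ℝ) ≤ 1/Real.cosh y := by positivity
  have hpow : (1/Real.cosh y)^6 ≤ (32/33:ℝ)^6 := pow_le_pow_left₀ hsech0 hsech 6
  have hQ : (1:ℝ)/16 ≤ 1 - (1/Real.cosh y)^6 := by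
    have : ((32:ℝ)/33)^6 ≤ 15/16 := by norm_num
    linarith
  have harg : (1:ℝ)/4 ≤ 4 * π / 3 * (1 - (1/Real.cosh y)^6) := by
    nlinarith [Real.pi_gt_three]
  have hsqrt : (1:ℝ)/2 ≤ Real.sqrt (4 * π / 3 * (1 - (1/Real.cosh y)^6)) := by
    have h := Real.sqrt_le_sqrt harg
    rwa [show ((1:ℝ)/4) = (1/2)^2 by norm_num, Real.sqrt_sq (by norm_num : (0:ℝ) ≤ 1/2)] at h
  calc (Real.sqrt (4 * π / 3 * (1 - (1/Real.cosh y)^6)))⁻¹ ≤ ((1:ℝ)/2)⁻¹ := by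
        apply inv_anti₀ (by norm_num) hsqrt
    _ = 2 := by norm_num

set_option maxHeartbeats 1000000 in
/-- `√(π r) G(r) = 1 + 2r³/(3π) + O(r⁵)` as `r → 0⁺`. -/
theorem G_asymptotic :
    ∃ δ > (0 : ℝ), ∃ M > (0 : ℝ), ∀ r : ℝ, 0 < r → r < δ →
      |Real.sqrt (π * r) * G r - 1 - 2 * r ^ 3 / (3 * π)| ≤ M * r ^ 5 := by
  refine ⟨1/2, by norm_num, 100000000000, by norm_num, fun r hr0 hrh => ?_⟩
  have hr1 : r ≤ 1 := by linarith
  have hpi3 : (3:ℝ) < π := Real.pi_gt_three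
  have hpi315 : π < 3.15 := by linarith [Real.pi_lt_d2]
  have hr5 : (0:ℝ) < r^5 := by positivity
  -- phi bound
  have hphi : |phi r| ≤ 14 * r^5 := phi_bound hr0.le hr1
  have hphi' : -(14*r^5) ≤ phi r ∧ phi r ≤ 14*r^5 := abs_le.1 hphi
  -- c₀ (2r) in closed form
  have htanh_le : Real.tanh r ≤ 1 := by
    rw [Real.tanh_eq_sinh_div_cosh, div_le_one (Real.cosh_pos r)]
    linarith [Real.cosh_sub_sinh r, Real.exp_pos (-r)]
  have htanh_ge : -1 ≤ Real.tanh r := by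
    rw [Real.tanh_eq_sinh_div_cosh, le_div_iff₀ (Real.cosh_pos r)]
    linarith [Real.cosh_add_sinh r, Real.exp_pos r]
  have hg_eq : c₀ (2*r) = π/2 - 2*r^3/3 + phi r := by
    have hhh : hh (2*r) = Real.arccos (Real.tanh r) := by unfold hh; norm_num
    have hsin : Real.sin (2 * Real.arccos (Real.tanh r)) / 2
        = Real.sinh r / Real.cosh r^2 := by
      rw [Real.sin_two_mul, Real.sin_arccos, Real.cos_arccos htanh_ge htanh_le,
        sqrt_one_sub_tanh_sq, Real.tanh_eq_sinh_div_cosh]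
      field_simp
    unfold c₀
    rw [hhh, hsin]
    unfold phi
    ring
  set g := c₀ (2*r) with hgdef
  have hr3 : r^3 ≤ 1/8 := by
    have := pow_le_pow_left₀ hr0.le (le_of_lt hrh) 3; norm_num at this; linarith
  have hr5' : r^5 ≤ 1/32 := by
    have := pow_le_pow_left₀ hr0.le (le_of_lt hrh) 5; norm_num at this; linarith
  have hr2 : r^2 ≤ 1/4 := by
    have := pow_le_pow_left₀ hr0.le (le_of_lt hrh) 2; norm_num at this; linarith
  have hg1 : (1:ℝ) ≤ g := by
    rw [hg_eq]
    have hpi314 : 3.14 < π := by linarith [Real.pi_gt_d6]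
    linarith [hphi'.1]
  have hgpos : (0:ℝ) < g := lt_of_lt_of_le one_pos hg1
  -- the main term equals s⁻¹
  set u := 2*g/π with hudef
  have hupos : (0:ℝ) < u := by positivity
  set s := Real.sqrt u with hsdef
  have hspos : (0:ℝ) < s := Real.sqrt_pos.2 hupos
  have hs2 : s^2 = u := Real.sq_sqrt hupos.le
  have hu_half : (1:ℝ)/2 ≤ u := by
    rw [hudef, le_div_iff₀ Real.pi_pos]
    nlinarith
  have hT1 : Real.sqrt (π*r) * (1 / Real.sqrt (2*r*g)) = s⁻¹ := by
    rw [mul_one_div, ← Real.sqrt_div (by positivity) (2*r*g)]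
    rw [show (π*r)/(2*r*g) = u⁻¹ by
      rw [hudef, inv_div]; field_simp]
    rw [Real.sqrt_inv]
  -- key algebraic bound on s⁻¹
  have hkey : |s⁻¹ - 1 - (1 - s^2)/2| ≤ (1 - s^2)^2 := by
    have hrepr : s⁻¹ - 1 - (1-s^2)/2 = (1-s^2)^2*(s+2)/(2*s*(1+s)^2) := by
      field_simp
      ring
    have hfac : s + 2 ≤ 2*s*(1+s)^2 := by nlinarith [hs2, hu_half, hspos]
    rw [hrepr, abs_of_nonneg (by positivity)]
    rw [div_le_iff₀ (by positivity)]
    nlinarith [sq_nonneg (1-s^2), hfac, mul_le_mul_of_nonneg_left hfac (sq_nonneg (1-s^2))]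
  -- express 1 - s² in terms of phi
  have hx_eq : 1 - s^2 = (4*r^3/3 - 2*phi r)/π := by
    rw [hs2, hudef, hg_eq]
    field_simp
    ring
  -- main term estimate
  have hmain : |s⁻¹ - 1 - 2*r^3/(3*π)| ≤ 10 * r^5 := by
    have hxabs : |1 - s^2| ≤ 3*r^3 := by
      rw [hx_eq, abs_div, abs_of_pos Real.pi_pos, div_le_iff₀ Real.pi_pos]
      have h1 : |4*r^3/3 - 2*phi r| ≤ 4*r^3/3 + 28*r^5 := by
        calc |4*r^3/3 - 2*phi r| ≤ |4*r^3/3| + |2*phi r| := abs_sub _ _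
          _ = 4*r^3/3 + 2*|phi r| := by
              rw [abs_of_nonneg (by positivity), abs_mul, abs_of_nonneg (by norm_num : (0:ℝ) ≤ 2)]
          _ ≤ 4*r^3/3 + 28*r^5 := by linarith
      have h2 : 28*r^5 ≤ 7*r^3 := by nlinarith [pow_pos hr0 3]
      nlinarith [pow_pos hr0 3, abs_nonneg (4*r^3/3 - 2*phi r)]
    have hx2 : (1 - s^2)^2 ≤ 9*r^6 := by
      have := abs_nonneg (1 - s^2)
      nlinarith [sq_abs (1 - s^2), pow_pos hr0 3]
    have hx2' : (1 - s^2)^2 ≤ 5*r^5 := by nlinarith [pow_pos hr0 5, pow_pos hr0 6]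
    have hdist : |(1 - s^2)/2 - 2*r^3/(3*π)| ≤ 5*r^5 := by
      have : (1 - s^2)/2 - 2*r^3/(3*π) = -(phi r)/π := by
        rw [hx_eq]; field_simp; ring
      rw [this, abs_div, abs_of_pos Real.pi_pos, abs_neg, div_le_iff₀ Real.pi_pos]
      nlinarith [hphi, abs_nonneg (phi r)]
    calc |s⁻¹ - 1 - 2*r^3/(3*π)|
        = |(s⁻¹ - 1 - (1 - s^2)/2) + ((1 - s^2)/2 - 2*r^3/(3*π))| := by ring_nf
      _ ≤ |s⁻¹ - 1 - (1 - s^2)/2| + |(1 - s^2)/2 - 2*r^3/(3*π)| := abs_add_le _ _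
      _ ≤ (1 - s^2)^2 + 5*r^5 := by linarith [hkey]
      _ ≤ 10 * r^5 := by linarith
  -- tail term
  have hsinh_pos : 0 < Real.sinh r := Real.sinh_pos_iff.2 hr0
  have hsinh_ge : r ≤ Real.sinh r := Real.self_le_sinh_iff.2 hr0.le
  have hsinh_le : Real.sinh r ≤ 2*r := by
    have h1 := sinh_le_mul_cosh' hr0.le
    have h2 := cosh_le_one_add_sq' hr0.le hr1
    nlinarith
  set T2 := Real.sqrt (π*r) * (2 * Real.exp (π * Real.sqrt 3) * TeoC (Real.log 3 / 2)
    * Real.exp (-π / Real.sinh r) / (3 * Real.sinh r ^ 2)) with hT2def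
  have hTeo0 : 0 ≤ TeoC (Real.log 3 / 2) := inv_nonneg.2 (Real.sqrt_nonneg _)
  have hT2_0 : 0 ≤ T2 := by positivity
  have hsqle : Real.sqrt (π*r) ≤ 2 := by
    have h1 : Real.sqrt (π*r) ≤ Real.sqrt 4 := Real.sqrt_le_sqrt (by nlinarith)
    rwa [show (4:ℝ) = 2^2 by norm_num, Real.sqrt_sq (by norm_num : (0:ℝ) ≤ 2)] at h1
  have hexpc : Real.exp (π * Real.sqrt 3) ≤ 2187 := by
    have h3 : Real.sqrt 3 ≤ 2 := by
      rw [show (2:ℝ) = Real.sqrt 4 by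
        rw [show (4:ℝ) = 2^2 by norm_num, Real.sqrt_sq (by norm_num : (0:ℝ) ≤ 2)]]
      exact Real.sqrt_le_sqrt (by norm_num)
    have h7 : π * Real.sqrt 3 ≤ 7 := by
      nlinarith [Real.sqrt_nonneg 3, Real.pi_pos]
    calc Real.exp (π * Real.sqrt 3) ≤ Real.exp 7 := Real.exp_le_exp.2 h7
      _ = Real.exp 1 ^ 7 := by
          rw [← Real.exp_nat_mul]; norm_num
      _ ≤ 3^7 := by
          apply pow_le_pow_left₀ (Real.exp_pos 1).le
          linarith [Real.exp_one_lt_d9]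
      _ = 2187 := by norm_num
  have hexp1 : Real.exp (-π / Real.sinh r) ≤ Real.exp (-(1/r)) := by
    apply Real.exp_le_exp.2
    rw [neg_div, neg_le_neg_iff, div_le_div_iff₀ hr0 hsinh_pos]
    nlinarith
  have hexp2 : Real.exp (-(1/r)) ≤ 8^8 * r^8 := by
    have h8 : Real.exp (1/r) = Real.exp (1/(8*r)) ^ 8 := by
      rw [← Real.exp_nat_mul]
      congr 1
      field_simp
      norm_num
    have hb : 1/(8*r) ≤ Real.exp (1/(8*r)) := by
      linarith [Real.add_one_le_exp (1/(8*r)), show (0:ℝ) < 1/(8*r) by positivity]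
    have hlow : (1/(8*r))^8 ≤ Real.exp (1/r) := by
      rw [h8]
      exact pow_le_pow_left₀ (by positivity) hb 8
    rw [Real.exp_neg]
    have h88 : (0:ℝ) < (1/(8*r))^8 := by positivity
    have := inv_anti₀ h88 hlow
    calc (Real.exp (1/r))⁻¹ ≤ ((1/(8*r))^8)⁻¹ := this
      _ = (8*r)^8 := by
          rw [one_div, inv_pow, inv_inv]
      _ = 8^8 * r^8 := by rw [mul_pow]
  -- assemble tail bound
  have hE2 : Real.exp (-π / Real.sinh r) ≤ 8^8 * r^8 := hexp1.trans hexp2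
  have hA2 : 2 * Real.exp (π * Real.sqrt 3) * TeoC (Real.log 3 / 2) ≤ 2*2187*2 := by
    have h1 : 2 * Real.exp (π * Real.sqrt 3) ≤ 2*2187 := by linarith
    have := mul_le_mul h1 TeoC_le_two hTeo0 (by norm_num : (0:ℝ) ≤ 2*2187)
    linarith
  have hA3 : 2 * Real.exp (π * Real.sqrt 3) * TeoC (Real.log 3 / 2)
      * Real.exp (-π / Real.sinh r) ≤ 2*2187*2*(8^8*r^8) := by
    have h0 : (0:ℝ) ≤ Real.exp (-π / Real.sinh r) := (Real.exp_pos _).le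
    have := mul_le_mul hA2 hE2 h0 (by norm_num : (0:ℝ) ≤ 2*2187*2)
    linarith
  have hden : 3*r^2 ≤ 3*Real.sinh r^2 := by
    nlinarith [pow_le_pow_left₀ hr0.le hsinh_ge 2]
  have hfrac : 2 * Real.exp (π * Real.sqrt 3) * TeoC (Real.log 3 / 2)
      * Real.exp (-π / Real.sinh r) / (3*Real.sinh r^2)
      ≤ (2*2187*2*(8^8*r^8))/(3*r^2) :=
    div_le_div₀ (by positivity) hA3 (by positivity) hden
  have hT2b : T2 ≤ 2 * ((2*2187*2*(8^8*r^8))/(3*r^2)) := by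
    rw [hT2def]
    apply mul_le_mul hsqle hfrac _ (by norm_num)
    positivity
  have hT2c : 2 * ((2*2187*2*(8^8*r^8))/(3*r^2)) = 97844723712 * r^6 := by
    field_simp
    ring
  have hT2d : T2 ≤ 48922361856 * r^5 := by
    rw [hT2c] at hT2b
    have h6 : r^5 * r ≤ r^5 * (1/2) := mul_le_mul_of_nonneg_left hrh.le hr5.le
    have h7 : r^6 = r^5 * r := by ring
    rw [h7] at hT2b
    linarith
  -- assemble everything
  have hGr : Real.sqrt (π*r) * G r = s⁻¹ + T2 := by
    rw [← hT1]
    simp only [hT2def, G, ← hgdef]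
    ring
  have hsplit : Real.sqrt (π*r) * G r - 1 - 2*r^3/(3*π)
      = (s⁻¹ - 1 - 2*r^3/(3*π)) + T2 := by rw [hGr]; ring
  calc |Real.sqrt (π*r) * G r - 1 - 2*r^3/(3*π)|
      = |(s⁻¹ - 1 - 2*r^3/(3*π)) + T2| := by rw [hsplit]
    _ ≤ |s⁻¹ - 1 - 2*r^3/(3*π)| + |T2| := abs_add_le _ _
    _ = |s⁻¹ - 1 - 2*r^3/(3*π)| + T2 := by rw [abs_of_nonneg hT2_0]
    _ ≤ 10*r^5 + 48922361856 * r^5 := by linarith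
    _ ≤ 100000000000 * r^5 := by linarith
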